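/- Let p be an odd prime, let n ≥ 2 be an even natural number, and set d = gcd(n, p−1). Suppose d > 1 and write p = d·s + 1 with s = (p−1)/d, and assume s ≥ 2. Then for h = ⌈d·s/(s−1)⌉, every element of ℤ/pℤ is a sum of h nonzero n-th powers; that is, for every c ∈ ℤ/pℤ there exist x_1, …, x_h ∈ ℤ/pℤ, all nonzero, with x_1^n + ⋯ + x_h^n = c. -/

import Mathlib

open Finset Pointwise

/-- Odd prime `p`, even `n ≥ 2`, `d = gcd(n, p-1) > 1`, `p = d·s + 1` with
`s = (p-1)/d ≥ 2`: with `h = ⌈ds/(s-1)⌉`, every element of `ℤ/pℤ` is a sum of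
`h` nonzero `n`-th powers. -/
theorem stmt_16 (p n d s h : ℕ) (hp : p.Prime) (hp2 : p ≠ 2)
    (hn : 2 ≤ n) (hneven : Even n)
    (hd : d = Nat.gcd n (p - 1)) (hd1 : 1 < d) (hs : s = (p - 1) / d)
    (hpds : p = d * s + 1) (hs2 : 2 ≤ s)
    (hh : h = (d * s + s - 2) / (s - 1)) :
    ∀ c : ZMod p, ∃ x : Fin h → ZMod p, (∀ i, x i ≠ 0) ∧ ∑ i, x i ^ n = c := by
  haveI : Fact p.Prime := ⟨hp⟩
  have hp1 : p - 1 = d * s := by omega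
  have hn0 : 0 < n := by omega
  classical
  set T : Finset (ZMod p) := Finset.univ \ {0} with hT
  set A : Finset (ZMod p) := T.image (· ^ n) with hA
  -- cardinality of T
  have hTcard : T.card = p - 1 := by
    rw [hT, Finset.card_sdiff_of_subset (by simp), Finset.card_univ, ZMod.card, Finset.card_singleton]
  -- every fiber of x ↦ x^n on T has size ≤ d
  have hfiber : ∀ a ∈ A, ({x ∈ T | x ^ n = a}).card ≤ d := by
    intro a ha
    rw [hA, Finset.mem_image] at ha
    obtain ⟨x0, hx0T, hx0⟩ := ha
    have hx0ne : x0 ≠ 0 := by simpa [hT] using hx0T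
    have : ({x ∈ T | x ^ n = a}).card ≤ (Polynomial.nthRoots d (1 : ZMod p)).toFinset.card := by
      apply Finset.card_le_card_of_injOn (fun x => x * x0⁻¹)
      · intro x hx
        simp only [Finset.mem_coe, Finset.mem_filter] at hx
        obtain ⟨hxT, hxn⟩ := hx
        have hxne : x ≠ 0 := by simpa [hT] using hxT
        have hune : x * x0⁻¹ ≠ 0 := by
          simp [hxne, hx0ne]
        have hun : (x * x0⁻¹) ^ n = 1 := by
          rw [mul_pow, inv_pow, hxn, ← hx0, mul_inv_cancel₀]
          exact pow_ne_zero _ hx0ne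
        have hup : (x * x0⁻¹) ^ (p - 1) = 1 := ZMod.pow_card_sub_one_eq_one hune
        have hud : (x * x0⁻¹) ^ d = 1 := by
          have h1 : orderOf (x * x0⁻¹) ∣ n := orderOf_dvd_of_pow_eq_one hun
          have h2 : orderOf (x * x0⁻¹) ∣ p - 1 := orderOf_dvd_of_pow_eq_one hup
          have h3 : orderOf (x * x0⁻¹) ∣ d := hd ▸ Nat.dvd_gcd h1 h2
          exact orderOf_dvd_iff_pow_eq_one.mp h3
        rw [Finset.mem_coe, Multiset.mem_toFinset, Polynomial.mem_nthRoots (by omega : 0 < d)]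
        exact hud
      · intro x _ y _ hxy
        have : x0⁻¹ ≠ 0 := inv_ne_zero hx0ne
        exact mul_right_cancel₀ this hxy
    calc ({x ∈ T | x ^ n = a}).card ≤ _ := this
      _ ≤ Multiset.card (Polynomial.nthRoots d (1 : ZMod p)) := Multiset.toFinset_card_le _
      _ ≤ d := Polynomial.card_nthRoots d (1 : ZMod p)
  -- lower bound on |A|
  have hcardA : s ≤ A.card := by
    have := Finset.card_le_mul_card_image (f := (· ^ n)) T d hfiber
    rw [hTcard, hp1] at this
    exact Nat.le_of_mul_le_mul_left this (by omega)
  have hAmem : ∀ a ∈ A, ∃ x : ZMod p, x ≠ 0 ∧ x ^ n = a := by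
    intro a ha
    rw [hA, Finset.mem_image] at ha
    obtain ⟨x, hxT, hx⟩ := ha
    exact ⟨x, by simpa [hT] using hxT, hx⟩
  have hAne : A.Nonempty := by
    refine ⟨1, ?_⟩
    rw [hA, Finset.mem_image]
    exact ⟨1, by simp [hT], by simp⟩
  -- membership extraction for iterated sumsets
  have hrep : ∀ k : ℕ, ∀ c ∈ k • A, ∃ x : Fin k → ZMod p, (∀ i, x i ≠ 0) ∧ ∑ i, x i ^ n = c := by
    intro k
    induction k with
    | zero =>
      intro c hc
      simp only [zero_nsmul, Finset.mem_zero] at hc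
      exact ⟨Fin.elim0, fun i => i.elim0, by simp [hc]⟩
    | succ k ih =>
      intro c hc
      rw [succ_nsmul, Finset.mem_add] at hc
      obtain ⟨b, hb, a, ha, hba⟩ := hc
      obtain ⟨x', hx'ne, hx'sum⟩ := ih b hb
      obtain ⟨y, hyne, hy⟩ := hAmem a ha
      refine ⟨Fin.snoc x' y, ?_, ?_⟩
      · intro i
        refine Fin.lastCases ?_ ?_ i
        · simpa using hyne
        · intro j; simpa using hx'ne j
      · rw [Fin.sum_univ_castSucc]
        simp only [Fin.snoc_castSucc, Fin.snoc_last]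
        rw [hx'sum, hy, hba]
  -- nonemptiness
  have hne : ∀ k : ℕ, (k • A).Nonempty := by
    intro k
    induction k with
    | zero => exact ⟨0, by simp [Finset.mem_zero]⟩
    | succ k ih =>
      rw [succ_nsmul]
      exact ih.add hAne
  -- cardinality lower bound by Cauchy-Davenport
  have hcard : ∀ k : ℕ, min p (k * (s - 1) + 1) ≤ (k • A).card := by
    intro k
    induction k with
    | zero =>
      simp only [zero_nsmul, zero_mul, zero_add]
      have : (0 : Finset (ZMod p)).card = 1 := by simp
      rw [this]
      exact min_le_right _ _
    | succ k ih =>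
      rw [succ_nsmul]
      have hcd := ZMod.cauchy_davenport hp (hne k) hAne
      have h1 : min p ((k + 1) * (s - 1) + 1) ≤ min p ((k • A).card + A.card - 1) := by
        rcases le_or_gt p ((k • A).card + A.card - 1) with hle | hlt
        · rw [min_eq_left hle]; exact min_le_left _ _
        · rw [min_eq_right (le_of_lt hlt)]
          rcases min_cases p (k * (s - 1) + 1) with ⟨heq, hle2⟩ | ⟨heq, hle2⟩
          · rw [heq] at ih
            have hA1 : 1 ≤ A.card := Finset.card_pos.mpr hAne
            have : p ≤ (k • A).card + A.card - 1 := by omega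
            omega
          · rw [heq] at ih
            have : k * (s - 1) + 1 + s - 1 ≤ (k • A).card + A.card - 1 := by
              have h1le : 1 ≤ (k • A).card := Finset.card_pos.mpr (hne k)
              omega
            have harith : (k + 1) * (s - 1) + 1 ≤ k * (s - 1) + 1 + s - 1 := by
              have : (k + 1) * (s - 1) = k * (s - 1) + (s - 1) := by ring
              omega
            calc min p ((k+1) * (s-1) + 1) ≤ (k+1) * (s-1) + 1 := min_le_right _ _
              _ ≤ k * (s - 1) + 1 + s - 1 := harith
              _ ≤ (k • A).card + A.card - 1 := this
      exact le_trans h1 hcd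
  -- h * (s - 1) ≥ d * s
  have e1 : (s - 1) * h + (d * s + s - 2) % (s - 1) = d * s + s - 2 := by
    rw [hh]; exact Nat.div_add_mod _ _
  have e2 : (d * s + s - 2) % (s - 1) < s - 1 := Nat.mod_lt _ (by omega)
  have e3 : h * (s - 1) = (s - 1) * h := mul_comm _ _
  have hhb : d * s ≤ h * (s - 1) := by omega
  -- conclude
  intro c
  have : p ≤ (h • A).card := by have := hcard h; omega
  have hsub : (h • A) = Finset.univ := by
    apply Finset.eq_univ_of_card
    have hle : (h • A).card ≤ Fintype.card (ZMod p) := Finset.card_le_univ _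
    rw [ZMod.card] at hle ⊢
    omega
  exact hrep h c (by rw [hsub]; exact Finset.mem_univ c)
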